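/- Let ζ₁ > 0, ζ₂, ζ₃ ∈ ℝ. Then lim_{N₁→∞} (1/(N₁N₂)) |∫_{-N₂/2}^{N₂/2} ∫_{-N₁/2}^{N₁/2} e^{i(ζ₁(n₁ − ζ₂n₂)² + ζ₃ n₂²)} dn₁ dn₂| = 0 for any fixed N₂ > 0. -/

import Mathlib

open Real Filter Complex intervalIntegral

noncomputable def fres (ζ : ℝ) : ℝ → ℂ := fun t => Complex.exp (Complex.I * ζ * (t:ℂ) ^ 2)

lemma fres_cont (ζ : ℝ) : Continuous (fres ζ) := by
  unfold fres; fun_prop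

lemma fres_norm (ζ : ℝ) (t : ℝ) : ‖fres ζ t‖ = 1 := by
  unfold fres
  have h : Complex.I * ζ * (t:ℂ) ^ 2 = ((ζ * t ^ 2 : ℝ) : ℂ) * Complex.I := by
    push_cast; ring
  rw [h, Complex.norm_exp_ofReal_mul_I]

lemma fres_even (ζ : ℝ) (t : ℝ) : fres ζ (-t) = fres ζ t := by
  unfold fres; push_cast; ring_nf

lemma fres_bound_nonneg (ζ : ℝ) (hζ : 0 < ζ) (x : ℝ) (hx : 0 ≤ x) :
    ‖∫ t in (0:ℝ)..x, fres ζ t‖ ≤ 1 + 3 / (2 * ζ) := by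
  have h2ζ : (0:ℝ) < 2 * ζ := by linarith
  rcases le_or_gt x 1 with hx1 | hx1
  · have h : ‖∫ t in (0:ℝ)..x, fres ζ t‖ ≤ 1 * |x - 0| := by
      apply intervalIntegral.norm_integral_le_of_norm_le_const
      intro t _; rw [fres_norm]
    rw [sub_zero, _root_.abs_of_nonneg hx, one_mul] at h
    have h3 : 0 ≤ 3 / (2 * ζ) := by positivity
    linarith
  · -- split at 1 and integrate by parts on [1, x]
    set c : ℂ := 2 * Complex.I * ζ with hc
    have hcne : c ≠ 0 := by
      simp [hc, Complex.I_ne_zero, Complex.ofReal_ne_zero, ne_of_gt hζ]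
    have hcnorm : ‖c‖ = 2 * ζ := by
      simp [hc, _root_.abs_of_nonneg (le_of_lt hζ)]
    set u : ℝ → ℂ := fun t => c⁻¹ * ((t:ℂ))⁻¹ with hu_def
    set u' : ℝ → ℂ := fun t => c⁻¹ * (-(((t:ℂ)) ^ 2)⁻¹) with hu'_def
    set v' : ℝ → ℂ := fun t => Complex.I * ζ * (2 * (t:ℂ)) * fres ζ t with hv'_def
    have hIcc : ∀ t ∈ Set.uIcc (1:ℝ) x, (1:ℝ) ≤ t := by
      intro t ht
      rw [Set.uIcc_of_le (le_of_lt hx1)] at ht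
      exact ht.1
    have hu : ∀ t ∈ Set.uIcc (1:ℝ) x, HasDerivAt u (u' t) t := by
      intro t ht
      have htpos : (0:ℝ) < t := lt_of_lt_of_le one_pos (hIcc t ht)
      have htne : ((t:ℂ)) ≠ 0 := by exact_mod_cast ne_of_gt htpos
      exact ((hasDerivAt_inv htne).comp_ofReal).const_mul c⁻¹
    have hv : ∀ t ∈ Set.uIcc (1:ℝ) x, HasDerivAt (fres ζ) (v' t) t := by
      intro t _
      have h1 : HasDerivAt (fun z : ℂ => Complex.I * ζ * z ^ 2)
          (Complex.I * ζ * (2 * (t:ℂ))) (t:ℂ) := by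
        have := (hasDerivAt_pow 2 ((t:ℂ))).const_mul (Complex.I * (ζ:ℂ))
        exact this.congr_deriv (by push_cast; ring)
      have := (h1.cexp).comp_ofReal
      exact this.congr_deriv (by simp only [hv'_def, fres]; ring)
    have hu'cont : ContinuousOn u' (Set.uIcc (1:ℝ) x) := by
      apply ContinuousOn.mul continuousOn_const
      apply ContinuousOn.neg
      apply ContinuousOn.inv₀ (by fun_prop)
      intro t ht
      have htpos : (0:ℝ) < t := lt_of_lt_of_le one_pos (hIcc t ht)
      have : ((t:ℂ)) ≠ 0 := by exact_mod_cast ne_of_gt htpos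
      exact pow_ne_zero 2 this
    have hv'cont : Continuous v' := by
      exact (by fun_prop : Continuous fun t : ℝ => Complex.I * ζ * (2*(t:ℂ))).mul (fres_cont ζ)
    have hibp := intervalIntegral.integral_mul_deriv_eq_deriv_mul hu hv
        (hu'cont.intervalIntegrable) (hv'cont.intervalIntegrable _ _)
    have hcongr : ∫ t in (1:ℝ)..x, fres ζ t = ∫ t in (1:ℝ)..x, u t * v' t := by
      apply intervalIntegral.integral_congr
      intro t ht
      have htpos : (0:ℝ) < t := lt_of_lt_of_le one_pos (hIcc t ht)
      have htne : ((t:ℂ)) ≠ 0 := by exact_mod_cast ne_of_gt htpos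
      simp only [hu_def, hv'_def, hc]
      field_simp
      rw [mul_div_cancel_right₀ _ (by exact_mod_cast ne_of_gt hζ : (ζ:ℂ) ≠ 0)]
    have hnormu : ∀ t : ℝ, 1 ≤ t → ‖u t * fres ζ t‖ ≤ 1 / (2 * ζ) := by
      intro t ht
      have htpos : (0:ℝ) < t := lt_of_lt_of_le one_pos ht
      rw [norm_mul, fres_norm, mul_one, hu_def]
      simp only [norm_mul, norm_inv, hcnorm, Complex.norm_real, Real.norm_eq_abs,
        _root_.abs_of_pos htpos]
      rw [one_div]
      have h1 : t⁻¹ ≤ 1 := by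
        rw [show (1:ℝ) = 1⁻¹ by norm_num]
        exact inv_anti₀ one_pos ht
      calc (2*ζ)⁻¹ * t⁻¹ ≤ (2*ζ)⁻¹ * 1 :=
            mul_le_mul_of_nonneg_left h1 (by positivity)
        _ = (2*ζ)⁻¹ := by ring
    have hnormu' : ∀ t : ℝ, ‖u' t * fres ζ t‖ = (2*ζ)⁻¹ * (t^2)⁻¹ := by
      intro t
      rw [norm_mul, fres_norm, mul_one, hu'_def]
      simp [norm_inv, hcnorm, Complex.norm_real, _root_.sq_abs]
    have htail : ‖∫ t in (1:ℝ)..x, u' t * fres ζ t‖ ≤ 1/(2*ζ) := by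
      have h1 : ‖∫ t in (1:ℝ)..x, u' t * fres ζ t‖ ≤ ∫ t in (1:ℝ)..x, ‖u' t * fres ζ t‖ :=
        intervalIntegral.norm_integral_le_integral_norm (le_of_lt hx1)
      have h2 : (∫ t in (1:ℝ)..x, ‖u' t * fres ζ t‖)
          = (2*ζ)⁻¹ * ∫ t in (1:ℝ)..x, (t:ℝ) ^ (-2 : ℤ) := by
        rw [← intervalIntegral.integral_const_mul]
        apply intervalIntegral.integral_congr
        intro t _
        show ‖u' t * fres ζ t‖ = (2*ζ)⁻¹ * (t:ℝ) ^ (-2 : ℤ)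
        rw [hnormu' t, zpow_neg]
        norm_num
      have h0 : (0:ℝ) ∉ Set.uIcc 1 x := by
        rw [Set.uIcc_of_le (le_of_lt hx1)]
        intro h; linarith [h.1]
      have hxpos : (0:ℝ) < x := by linarith
      have hxinv : (0:ℝ) ≤ x⁻¹ := by positivity
      have h5 : (∫ t in (1:ℝ)..x, (t:ℝ) ^ (-2 : ℤ)) ≤ 1 := by
        rw [integral_zpow (Or.inr ⟨by norm_num, h0⟩)]
        norm_num [zpow_neg]
        linarith
      calc ‖∫ t in (1:ℝ)..x, u' t * fres ζ t‖ ≤ (2*ζ)⁻¹ * ∫ t in (1:ℝ)..x, (t:ℝ) ^ (-2 : ℤ) := by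
            rw [← h2]; exact h1
        _ ≤ (2*ζ)⁻¹ * 1 := mul_le_mul_of_nonneg_left h5 (by positivity)
        _ = 1/(2*ζ) := by ring
    have h1x : ‖∫ t in (1:ℝ)..x, fres ζ t‖ ≤ 3/(2*ζ) := by
      rw [hcongr, hibp]
      have := hnormu x (le_of_lt hx1)
      have := hnormu 1 le_rfl
      calc ‖u x * fres ζ x - u 1 * fres ζ 1 - ∫ t in (1:ℝ)..x, u' t * fres ζ t‖
          ≤ ‖u x * fres ζ x - u 1 * fres ζ 1‖ + ‖∫ t in (1:ℝ)..x, u' t * fres ζ t‖ :=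
            norm_sub_le _ _
        _ ≤ (‖u x * fres ζ x‖ + ‖u 1 * fres ζ 1‖) + ‖∫ t in (1:ℝ)..x, u' t * fres ζ t‖ := by
            gcongr; exact norm_sub_le _ _
        _ ≤ (1/(2*ζ) + 1/(2*ζ)) + 1/(2*ζ) := by gcongr <;> assumption
        _ = 3/(2*ζ) := by ring
    have h01 : ‖∫ t in (0:ℝ)..1, fres ζ t‖ ≤ 1 := by
      have h : ‖∫ t in (0:ℝ)..1, fres ζ t‖ ≤ 1 * |(1:ℝ) - 0| := by
        apply intervalIntegral.norm_integral_le_of_norm_le_const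
        intro t _; rw [fres_norm]
      simpa using h
    have hsplit : (∫ t in (0:ℝ)..x, fres ζ t)
        = (∫ t in (0:ℝ)..1, fres ζ t) + ∫ t in (1:ℝ)..x, fres ζ t :=
      (intervalIntegral.integral_add_adjacent_intervals
        ((fres_cont ζ).intervalIntegrable _ _) ((fres_cont ζ).intervalIntegrable _ _)).symm
    rw [hsplit]
    calc ‖(∫ t in (0:ℝ)..1, fres ζ t) + ∫ t in (1:ℝ)..x, fres ζ t‖
        ≤ ‖∫ t in (0:ℝ)..1, fres ζ t‖ + ‖∫ t in (1:ℝ)..x, fres ζ t‖ := norm_add_le _ _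
      _ ≤ 1 + 3/(2*ζ) := by gcongr

lemma fres_bound_zero (ζ : ℝ) (hζ : 0 < ζ) (x : ℝ) :
    ‖∫ t in (0:ℝ)..x, fres ζ t‖ ≤ 1 + 3 / (2 * ζ) := by
  rcases le_or_gt 0 x with hx | hx
  · exact fres_bound_nonneg ζ hζ x hx
  · have h1 : (∫ t in (0:ℝ)..(-x), fres ζ (-t)) = ∫ t in x..(0:ℝ), fres ζ t := by
      simpa using intervalIntegral.integral_comp_neg (a := (0:ℝ)) (b := -x) (f := fres ζ)
    have h2 : (∫ t in (0:ℝ)..(-x), fres ζ t) = ∫ t in x..(0:ℝ), fres ζ t := by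
      rw [← h1]
      apply intervalIntegral.integral_congr
      intro t _
      show fres ζ t = fres ζ (-t)
      exact (fres_even ζ t).symm
    have h3 := fres_bound_nonneg ζ hζ (-x) (by linarith)
    rw [h2] at h3
    rw [intervalIntegral.integral_symm] at h3
    rwa [norm_neg] at h3

lemma fres_bound (ζ : ℝ) (hζ : 0 < ζ) (a b : ℝ) :
    ‖∫ t in a..b, fres ζ t‖ ≤ 2 * (1 + 3 / (2 * ζ)) := by
  have h : (∫ t in a..b, fres ζ t)
      = (∫ t in (0:ℝ)..b, fres ζ t) - ∫ t in (0:ℝ)..a, fres ζ t := by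
    have := intervalIntegral.integral_add_adjacent_intervals
      ((fres_cont ζ).intervalIntegrable (μ := MeasureTheory.volume) 0 a) ((fres_cont ζ).intervalIntegrable (μ := MeasureTheory.volume) a b)
    linear_combination this
  rw [h]
  calc ‖(∫ t in (0:ℝ)..b, fres ζ t) - ∫ t in (0:ℝ)..a, fres ζ t‖
      ≤ ‖∫ t in (0:ℝ)..b, fres ζ t‖ + ‖∫ t in (0:ℝ)..a, fres ζ t‖ := norm_sub_le _ _
    _ ≤ (1 + 3/(2*ζ)) + (1 + 3/(2*ζ)) :=
        add_le_add (fres_bound_zero ζ hζ b) (fres_bound_zero ζ hζ a)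
    _ = 2 * (1 + 3/(2*ζ)) := by ring

theorem UPA_distance_orthogonality_integral (ζ₁ ζ₂ ζ₃ N₂ : ℝ) (hζ₁ : 0 < ζ₁)
    (hN₂ : 0 < N₂) :
    Tendsto (fun N₁ : ℝ => (1 / (N₁ * N₂)) *
        ‖(∫ n₂ in (-(N₂/2))..(N₂/2), ∫ n₁ in (-(N₁/2))..(N₁/2),
          Complex.exp (Complex.I *
            ((ζ₁ * (n₁ - ζ₂ * n₂) ^ 2 + ζ₃ * n₂ ^ 2 : ℝ) : ℂ)))‖)
      atTop (nhds 0) := by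
  set C : ℝ := 2 * (1 + 3 / (2 * ζ₁)) with hCdef
  have hC : (0:ℝ) < C := by positivity
  have inner_bound : ∀ (N₁ n₂ : ℝ),
      ‖∫ n₁ in (-(N₁/2))..(N₁/2), Complex.exp (Complex.I *
        ((ζ₁ * (n₁ - ζ₂ * n₂) ^ 2 + ζ₃ * n₂ ^ 2 : ℝ) : ℂ))‖ ≤ C := by
    intro N₁ n₂
    have h1 : ∀ n₁ : ℝ, Complex.exp (Complex.I *
        ((ζ₁ * (n₁ - ζ₂ * n₂) ^ 2 + ζ₃ * n₂ ^ 2 : ℝ) : ℂ))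
        = Complex.exp (Complex.I * ((ζ₃ * n₂ ^ 2 : ℝ):ℂ)) * fres ζ₁ (n₁ - ζ₂ * n₂) := by
      intro n₁
      unfold fres
      rw [← Complex.exp_add]
      congr 1
      push_cast
      ring
    simp_rw [h1]
    rw [intervalIntegral.integral_const_mul, norm_mul]
    have h2 : ‖Complex.exp (Complex.I * ((ζ₃ * n₂ ^ 2 : ℝ):ℂ))‖ = 1 := by
      rw [mul_comm, Complex.norm_exp_ofReal_mul_I]
    rw [h2, one_mul]
    rw [intervalIntegral.integral_comp_sub_right (fun t => fres ζ₁ t) (ζ₂ * n₂)]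
    exact fres_bound ζ₁ hζ₁ _ _
  have outer_bound : ∀ N₁ : ℝ,
      ‖(∫ n₂ in (-(N₂/2))..(N₂/2), ∫ n₁ in (-(N₁/2))..(N₁/2),
          Complex.exp (Complex.I *
            ((ζ₁ * (n₁ - ζ₂ * n₂) ^ 2 + ζ₃ * n₂ ^ 2 : ℝ) : ℂ)))‖ ≤ C * N₂ := by
    intro N₁
    have h := intervalIntegral.norm_integral_le_of_norm_le_const
      (C := C) (a := -(N₂/2)) (b := N₂/2) (fun n₂ _ => inner_bound N₁ n₂)
    calc ‖_‖ ≤ C * |N₂/2 - (-(N₂/2))| := h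
      _ = C * N₂ := by
          rw [show N₂/2 - (-(N₂/2)) = N₂ by ring, _root_.abs_of_pos hN₂]
  have hev : ∀ᶠ N₁ in (atTop : Filter ℝ), ‖(1 / (N₁ * N₂)) *
      ‖(∫ n₂ in (-(N₂/2))..(N₂/2), ∫ n₁ in (-(N₁/2))..(N₁/2),
        Complex.exp (Complex.I *
          ((ζ₁ * (n₁ - ζ₂ * n₂) ^ 2 + ζ₃ * n₂ ^ 2 : ℝ) : ℂ)))‖‖ ≤ C / N₁ := by
    filter_upwards [eventually_gt_atTop (0:ℝ)] with N₁ hN₁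
    rw [Real.norm_eq_abs, abs_mul,
      _root_.abs_of_nonneg (by positivity : (0:ℝ) ≤ 1/(N₁*N₂)),
      _root_.abs_of_nonneg (norm_nonneg _)]
    calc (1/(N₁*N₂)) * ‖_‖ ≤ (1/(N₁*N₂)) * (C * N₂) :=
          mul_le_mul_of_nonneg_left (outer_bound N₁) (by positivity)
      _ = C / N₁ := by field_simp
  exact squeeze_zero_norm' hev (Tendsto.div_atTop tendsto_const_nhds tendsto_id)
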